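/- Let A_μ ∈ (−1,1) and A_e > 0, and define F₀(θ) = (2A_e/(1−A_μ))·X⋆''(θ) = −(2A_e/(1−A_μ))·X⋆(θ). Then for every θ ∈ ℝ, F₀(θ) + (A_μ/π) ∫_{−π}^{π} M(θ,η) F₀(η) dη = 2A_e·X⋆''(θ); that is, F₀ is the steady-state force on the unit circle for the viscosity-contrast boundary integral equation. -/

import Mathlib

open Real intervalIntegral

/-- The counterclockwise unit-circle parametrization `X⋆(θ) = (cos θ, sin θ)`. -/
noncomputable def Xstar (θ : ℝ) : Fin 2 → ℝ := ![Real.cos θ, Real.sin θ]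

/-- The matrix kernel
`M(θ,η) = (1/2)·[[1−cos(θ+η), −sin(θ+η)], [−sin(θ+η), 1+cos(θ+η)]]`. -/
noncomputable def Mmat (θ η : ℝ) : Matrix (Fin 2) (Fin 2) ℝ :=
  (1 / 2 : ℝ) •
    !![1 - Real.cos (θ + η), -Real.sin (θ + η);
       -Real.sin (θ + η), 1 + Real.cos (θ + η)]

lemma Xstar_continuous : Continuous Xstar := by
  apply continuous_pi
  intro i
  fin_cases i <;> simp [Xstar] <;> fun_prop

lemma Xstar_integral : (∫ η in (-π)..π, Xstar η) = 0 := by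
  have h : ∀ η ∈ Set.uIcc (-π) π,
      HasDerivAt (fun t => (![Real.sin t, -Real.cos t] : Fin 2 → ℝ)) (Xstar η) η := by
    intro η _
    rw [hasDerivAt_pi]
    intro i
    fin_cases i
    · simpa [Xstar] using Real.hasDerivAt_sin η
    · simpa [Xstar] using (Real.hasDerivAt_cos η).fun_neg
  rw [intervalIntegral.integral_eq_sub_of_hasDerivAt h
    (Xstar_continuous.intervalIntegrable _ _)]
  simp

/-- `F₀(θ) = (2A_e/(1−A_μ))·X⋆''(θ) = −(2A_e/(1−A_μ))·X⋆(θ)` is the steady-state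
force on the unit circle for the viscosity-contrast boundary integral equation:
for every `θ`, `F₀(θ) + (A_μ/π)∫_{−π}^{π} M(θ,η)F₀(η)dη = 2A_e·X⋆''(θ)`. -/
theorem steadyState_force (Aμ Ae : ℝ) (hμ : Aμ ∈ Set.Ioo (-1 : ℝ) 1) (hAe : 0 < Ae)
    (F₀ : ℝ → Fin 2 → ℝ)
    (hF₀ : ∀ θ, F₀ θ = (2 * Ae / (1 - Aμ)) • (-(Xstar θ))) :
    ∀ θ : ℝ,
      F₀ θ + (Aμ / π) • (∫ η in (-π)..π, (Mmat θ η).mulVec (F₀ η)) =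
        (2 * Ae) • (-(Xstar θ)) := by
  intro θ
  set c : ℝ := 2 * Ae / (1 - Aμ) with hc
  have hkey : ∀ η, (Mmat θ η).mulVec (F₀ η)
      = (-(c / 2)) • Xstar η + (c / 2) • Xstar θ := by
    intro η
    funext i
    fin_cases i <;>
      simp [Mmat, Xstar, Matrix.mulVec, dotProduct, hF₀, Fin.sum_univ_two,
        Real.cos_add, Real.sin_add]
    · linear_combination (c / 2 * Real.cos θ) * Real.sin_sq_add_cos_sq η
    · linear_combination (c / 2 * Real.sin θ) * Real.sin_sq_add_cos_sq η
  have hint : (∫ η in (-π)..π, (Mmat θ η).mulVec (F₀ η)) = (c * π) • Xstar θ := by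
    simp only [hkey]
    rw [intervalIntegral.integral_add, intervalIntegral.integral_smul,
      intervalIntegral.integral_smul, Xstar_integral,
      intervalIntegral.integral_const]
    · rw [smul_zero, zero_add, smul_smul]
      congr 1
      ring
    · exact (((continuous_const (y := (-(c / 2) : ℝ))).smul Xstar_continuous).intervalIntegrable _ _)
    · exact intervalIntegrable_const
  rw [hint, hF₀, smul_smul]
  have hπ : (π : ℝ) ≠ 0 := Real.pi_ne_zero
  have h1 : (1 : ℝ) - Aμ ≠ 0 := by
    have := hμ.2; intro h; nlinarith
  have : Aμ / π * (c * π) = Aμ * c := by field_simp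
  rw [this]
  rw [show (Aμ * c) • Xstar θ = (-(Aμ * c)) • (-(Xstar θ)) by simp,
    ← add_smul]
  congr 1
  rw [hc]
  field_simp
  ring
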